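/- For any partition \lambda of n and any non-negative reverse Young tableau T of shape \lambda, the statistic b_T := \sum_{i=1}^n \nu(T)_i (c_{S(T)}(i) + i - 1) is a non-negative integer. -/

import Mathlib

open scoped Classical

/-- Content of a box `(a, b)` (row `a`, column `b`, zero-indexed). -/
def content (c : ℕ × ℕ) : ℤ := (c.2 : ℤ) - (c.1 : ℤ)

/-- Non-negative reverse Young tableaux of shape `μ`. -/
def IsRYT (μ : YoungDiagram) (T : ℕ × ℕ → ℕ) : Prop :=
  (∀ c ∈ μ.cells, (c.1, c.2 + 1) ∈ μ.cells → T (c.1, c.2 + 1) ≤ T c) ∧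
  (∀ c ∈ μ.cells, (c.1 + 1, c.2) ∈ μ.cells → T (c.1 + 1, c.2) ≤ T c)

/-- Column-standard (column-reading) order on boxes. -/
def colOrd (a b : ℕ × ℕ) : Prop := a.2 < b.2 ∨ (a.2 = b.2 ∧ a.1 < b.1)

/-- Box `a` precedes box `b` in the order defining `S(T)`. -/
def precBox (T : ℕ × ℕ → ℕ) (a b : ℕ × ℕ) : Prop :=
  T b < T a ∨ (T a = T b ∧ colOrd a b)

/-- `S(T)(b)`: one plus the number of boxes preceding `b`. -/
noncomputable def Slab (μ : YoungDiagram) (T : ℕ × ℕ → ℕ) (b : ℕ × ℕ) : ℕ :=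
  (μ.cells.filter (fun a => precBox T a b)).card + 1

/-- the statistic `b_T = ∑_{i=1}^n ν(T)_i (c_{S(T)}(i) + i - 1)` is a
non-negative integer. (Since the `i`-th largest value `ν(T)_i` of `T` sits in the box of
`μ` labelled `i` by `S(T)`, the sum may be re-indexed over the boxes of `μ`.) -/
theorem bT_nonneg (μ : YoungDiagram) (T : ℕ × ℕ → ℕ) (hT : IsRYT μ T) :
    0 ≤ ∑ c ∈ μ.cells, (T c : ℤ) * (content c + (Slab μ T c : ℤ) - 1) := by
  -- column monotonicity
  have colmono : ∀ (i k b : ℕ), (i + k, b) ∈ μ.cells → T (i + k, b) ≤ T (i, b) := by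
    intro i k
    induction k with
    | zero => intro b h; exact le_refl _
    | succ k ih =>
      intro b h
      have hmem : (i + k, b) ∈ μ.cells := by
        rw [YoungDiagram.mem_cells] at h ⊢
        exact μ.up_left_mem (by omega) le_rfl h
      have h1 : T (i + k + 1, b) ≤ T (i + k, b) := hT.2 (i + k, b) hmem h
      exact le_trans (by simpa [Nat.add_assoc] using h1) (ih b hmem)
  apply Finset.sum_nonneg
  intro c hc
  apply mul_nonneg (by positivity)
  have hcard : c.1 ≤ (μ.cells.filter (fun a => precBox T a c)).card := by
    have := Finset.card_le_card_of_injOn (s := Finset.range c.1)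
      (t := μ.cells.filter (fun a => precBox T a c)) (fun i => (i, c.2)) ?_ ?_
    · simpa using this
    · intro i hi
      rw [Finset.mem_coe, Finset.mem_range] at hi
      have hmem : (i, c.2) ∈ μ.cells := by
        rw [YoungDiagram.mem_cells] at hc ⊢
        exact μ.up_left_mem (le_of_lt hi) le_rfl (by simpa using hc)
      rw [Finset.mem_coe, Finset.mem_filter]
      refine ⟨hmem, ?_⟩
      have hle : T c ≤ T (i, c.2) := by
        have := colmono i (c.1 - i) c.2 (by simpa [Nat.add_sub_cancel' (le_of_lt hi)] using hc)
        simpa [Nat.add_sub_cancel' (le_of_lt hi)] using this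
      rcases lt_or_eq_of_le hle with h | h
      · exact Or.inl h
      · exact Or.inr ⟨h.symm, Or.inr ⟨rfl, hi⟩⟩
    · intro a _ b _ hab
      simpa using congrArg Prod.fst hab
  simp only [content, Slab]
  push_cast
  omega
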